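/- For every separable metrizable topological space M, it is not the case that K(M) ≥_T Σ(ω^{ω₁}); that is, there is no map φ : K(M) → Σ(ω^{ω₁}) carrying cofinal subsets of K(M) to cofinal subsets of Σ(ω^{ω₁}). -/

import Mathlib

open Cardinal Set

universe u v

/-- `C` is cofinal for `P'` in `P`: every element of `P'` lies below some element of `C`. -/
def IsCofinalFor' {P : Type u} [Preorder P] (P' C : Set P) : Prop :=
  ∀ p ∈ P', ∃ c ∈ C, p ≤ c

/-- `φ : P → Q` is a relative Tukey quotient from `(P', P)` to `(Q', Q)`:
it maps every subset of `P` cofinal for `P'` to a subset of `Q` cofinal for `Q'`. -/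
def IsRelTukeyQuotient {P : Type u} {Q : Type v} [Preorder P] [Preorder Q]
    (P' : Set P) (Q' : Set Q) (φ : P → Q) : Prop :=
  ∀ C : Set P, IsCofinalFor' P' C → IsCofinalFor' Q' (φ '' C)

/-- `(P', P) ≥_T (Q', Q)`: there exists a relative Tukey quotient. -/
def RelTukeyGE {P : Type u} {Q : Type v} [Preorder P] [Preorder Q]
    (P' : Set P) (Q' : Set Q) : Prop :=
  ∃ φ : P → Q, IsRelTukeyQuotient P' Q' φ

/-- `P ≥_T Q`: there is a Tukey quotient from `P` to `Q`. -/
def TukeyGE (P : Type u) (Q : Type v) [Preorder P] [Preorder Q] : Prop :=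
  RelTukeyGE (Set.univ : Set P) (Set.univ : Set Q)

/-- `A` is unbounded in `P`: it has no upper bound in `P`. -/
def UnboundedIn {P : Type u} [Preorder P] (A : Set P) : Prop :=
  ¬ ∃ b : P, ∀ a ∈ A, a ≤ b

noncomputable section

/-- `ω₁`: the set of countable ordinals, as the canonical well-order of order type `ω₁`. -/
def O1 : Type := (Cardinal.aleph 1).ord.ToType

noncomputable instance : LinearOrder O1 :=
  inferInstanceAs (LinearOrder (Cardinal.aleph 1).ord.ToType)

/-- `ω₁` carries its order topology. -/
instance : TopologicalSpace O1 := Preorder.topology O1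

instance : OrderTopology O1 := ⟨rfl⟩

/-- `K(S)` for `S ⊆ ω₁`: the compact subsets of `S` (equivalently, compact subsets of `ω₁`
contained in `S`), ordered by inclusion. -/
def KS (S : Set O1) : Type := {K : Set O1 // K ⊆ S ∧ IsCompact K}

instance (S : Set O1) : PartialOrder (KS S) := Subtype.partialOrder _

/-- `A ⊆ ω₁` is bounded in `ω₁`. -/
def BddO1 (A : Set O1) : Prop := ∃ β : O1, ∀ x ∈ A, x ≤ β

/-- `Σ(ω^{ω₁})`: the functions `f : ω₁ → ℕ` which vanish beyond some countable ordinal,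
with the pointwise order. -/
def SigmaOm : Type := {f : O1 → ℕ // ∃ γ : O1, ∀ β : O1, γ < β → f β = 0}

instance : PartialOrder SigmaOm := Subtype.partialOrder _

/-- `K(M)`: the poset of compact subsets of a space `M`, ordered by inclusion. -/
def KM (M : Type u) [TopologicalSpace M] : Type u := {K : Set M // IsCompact K}

instance (M : Type u) [TopologicalSpace M] : PartialOrder (KM M) := Subtype.partialOrder _

namespace Statement17Aux

open TopologicalSpace EMetric Metric ENNReal Topology Filter

/-- `ω₁` is uncountable. -/
lemma O1_uncountable : ¬ (Set.univ : Set O1).Countable := by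
  rw [Set.countable_univ_iff]
  intro h
  have h2 : #O1 = Cardinal.aleph 1 := by
    have := Cardinal.mk_toType (Cardinal.aleph 1).ord
    rw [Cardinal.card_ord] at this
    exact this
  have h1 : #O1 ≤ ℵ₀ := Cardinal.mk_le_aleph0
  rw [h2] at h1
  exact absurd (lt_of_lt_of_le Cardinal.aleph0_lt_aleph_one h1) (lt_irrefl _)

lemma countable_Iic (β : O1) : (Set.Iic β).Countable := by
  have h1 : (Set.Iio β).Countable := by
    rw [Cardinal.countable_iff_lt_aleph_one]
    exact Cardinal.mk_Iio_ord_toType (c := Cardinal.aleph 1) β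
  have : Set.Iic β = Set.Iio β ∪ {β} := by
    ext x; simp [le_iff_lt_or_eq]
  rw [this]
  exact h1.union (Set.countable_singleton β)

lemma exists_notMem {S : Set O1} (hS : S.Countable) : ∃ β : O1, β ∉ S := by
  by_contra h
  push_neg at h
  exact O1_uncountable (hS.mono fun x _ => h x)

lemma exists_ge_of_uncountable {Ω : Set O1} (hΩ : ¬ Ω.Countable) (γ : O1) :
    ∃ β ∈ Ω, γ ≤ β := by
  by_contra h
  push_neg at h
  exact hΩ ((countable_Iic γ).mono fun β hβ => le_of_lt (h β hβ))

/-- A choice of injections of the initial segments of `ω₁` into `ℕ`. -/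
noncomputable def iotaFun (β : O1) : ↥(Set.Iic β) → ℕ :=
  (Set.countable_iff_exists_injective.mp (countable_Iic β)).choose

lemma iotaFun_inj (β : O1) : Function.Injective (iotaFun β) :=
  (Set.countable_iff_exists_injective.mp (countable_Iic β)).choose_spec

/-- The coherent family `f_β ∈ Σ(ω^{ω₁})`. -/
noncomputable def fb (β : O1) : SigmaOm :=
  ⟨fun γ => if h : γ ≤ β then iotaFun β ⟨γ, h⟩ + 1 else 0,
   ⟨β, fun γ hγ => dif_neg (not_le.2 hγ)⟩⟩

/-- Key combinatorial property of the coherent family: over any uncountable index set,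
only countably many coordinates have bounded values. -/
lemma coherent {Ω : Set O1} (hΩ : ¬ Ω.Countable) :
    {γ : O1 | ∃ N : ℕ, ∀ β ∈ Ω, (fb β).1 γ ≤ N}.Countable := by
  have heq : {γ : O1 | ∃ N : ℕ, ∀ β ∈ Ω, (fb β).1 γ ≤ N} =
      ⋃ N : ℕ, {γ : O1 | ∀ β ∈ Ω, (fb β).1 γ ≤ N} := by
    ext γ; simp [Set.mem_iUnion]
  rw [heq]
  refine Set.countable_iUnion fun N => Set.Finite.countable ?_
  by_contra hinf
  obtain ⟨t, htsub, htcard⟩ :=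
    Set.Infinite.exists_subset_card_eq (s := {γ : O1 | ∀ β ∈ Ω, (fb β).1 γ ≤ N}) hinf (N + 2)
  have htne : t.Nonempty := Finset.card_pos.mp (by omega)
  obtain ⟨β, hβΩ, hβge⟩ := exists_ge_of_uncountable hΩ (t.max' htne)
  have hmem : ∀ γ ∈ t, (fb β).1 γ ∈ Finset.Icc 1 N := by
    intro γ hγ
    have hγβ : γ ≤ β := le_trans (Finset.le_max' t γ hγ) hβge
    have hub : (fb β).1 γ ≤ N := htsub hγ β hβΩ
    have hlb : 1 ≤ (fb β).1 γ := by
      show 1 ≤ (if h : γ ≤ β then iotaFun β ⟨γ, h⟩ + 1 else 0)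
      rw [dif_pos hγβ]; omega
    exact Finset.mem_Icc.mpr ⟨hlb, hub⟩
  have hinj : Set.InjOn (fun γ => (fb β).1 γ) ↑t := by
    intro γ₁ hγ₁ γ₂ hγ₂ hval
    have h₁ : γ₁ ≤ β := le_trans (Finset.le_max' t γ₁ hγ₁) hβge
    have h₂ : γ₂ ≤ β := le_trans (Finset.le_max' t γ₂ hγ₂) hβge
    simp only [fb] at hval
    rw [dif_pos h₁, dif_pos h₂] at hval
    have := iotaFun_inj β (Nat.succ_injective hval)
    exact Subtype.mk_eq_mk.mp this
  have hcard := Finset.card_le_card_of_injOn (fun γ => (fb β).1 γ) hmem hinj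
  rw [htcard, Nat.card_Icc] at hcard
  omega

/-- In a second-countable (e)metric space, any map from an uncountable index type has a
value all of whose neighbourhoods are hit uncountably often. -/
lemma prune {X : Type v} [EMetricSpace X] [SecondCountableTopology X]
    {I : Type u} (hI : ¬ (Set.univ : Set I).Countable) (u : I → X) :
    ∃ i₀ : I, ∀ ε : ℝ≥0∞, 0 < ε → ¬ ({i : I | edist (u i) (u i₀) < ε}).Countable := by
  classical
  obtain ⟨B, hBc, -, hB⟩ := TopologicalSpace.exists_countable_basis X
  set S : Set I := ⋃ V ∈ {V ∈ B | {i : I | u i ∈ V}.Countable}, {i : I | u i ∈ V} with hS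
  have hSc : S.Countable :=
    Set.Countable.biUnion (hBc.mono (Set.sep_subset _ _)) fun V hV => hV.2
  have hns : ¬ (Set.univ : Set I) ⊆ S := fun hsub => hI (hSc.mono hsub)
  obtain ⟨i₀, -, hi₀⟩ := Set.not_subset.mp hns
  refine ⟨i₀, fun ε hε hcount => ?_⟩
  obtain ⟨V, hVB, hVmem, hVsub⟩ :=
    hB.exists_subset_of_mem_open (EMetric.mem_ball_self hε (x := u i₀)) EMetric.isOpen_ball
  apply hi₀
  refine Set.mem_biUnion (show V ∈ {V ∈ B | {i : I | u i ∈ V}.Countable} from ⟨hVB, ?_⟩) hVmem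
  refine hcount.mono fun i hi => ?_
  have := hVsub hi
  rwa [EMetric.mem_ball] at this

/-- The union of a sequence of compact sets Hausdorff-converging to a compact set,
together with the limit, is compact. -/
lemma compact_union {M : Type u} [MetricSpace M]
    {Khat : Set M} (hKhat : IsCompact Khat)
    (K : ℕ → Set M) (hK : ∀ m, IsCompact (K m))
    (hdist : ∀ m, ∀ x ∈ K m, EMetric.infEdist x Khat ≤ ENNReal.ofReal ((2⁻¹ : ℝ) ^ m)) :
    IsCompact (Khat ∪ ⋃ m, K m) := by
  classical
  rw [isCompact_iff_ultrafilter_le_nhds]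
  intro F hF
  have hLmem : (Khat ∪ ⋃ m, K m) ∈ F := Filter.le_principal_iff.mp hF
  by_cases hfin : ∃ j : ℕ, (Khat ∪ ⋃ m ∈ Finset.range j, K m) ∈ F
  · obtain ⟨j, hj⟩ := hfin
    have hC : IsCompact (Khat ∪ ⋃ m ∈ Finset.range j, K m) :=
      hKhat.union ((Finset.range j).isCompact_biUnion fun m _ => hK m)
    obtain ⟨a, ha, hFa⟩ := hC.ultrafilter_le_nhds F (Filter.le_principal_iff.mpr hj)
    refine ⟨a, ?_, hFa⟩
    rcases ha with h | h
    · exact Or.inl h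
    · obtain ⟨m, -, hm⟩ := Set.mem_iUnion₂.mp h
      exact Or.inr (Set.mem_iUnion.mpr ⟨m, hm⟩)
  · push_neg at hfin
    by_contra hno
    push_neg at hno
    have hVa : ∀ a ∈ Khat, ∃ V : Set M, IsOpen V ∧ a ∈ V ∧ Vᶜ ∈ F := by
      intro a ha
      have hnle : ¬ (F : Filter M) ≤ 𝓝 a := hno a (Or.inl ha)
      rw [Filter.le_def] at hnle
      push_neg at hnle
      obtain ⟨U, hU, hUF⟩ := hnle
      refine ⟨interior U, isOpen_interior, mem_interior_iff_mem_nhds.mpr hU, ?_⟩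
      exact Filter.mem_of_superset (Ultrafilter.compl_mem_iff_notMem.mpr hUF)
        (Set.compl_subset_compl.mpr interior_subset)
    choose! V hVopen hVmem hVcompl using hVa
    obtain ⟨s, hs_sub, hsfin, hcover⟩ := hKhat.elim_finite_subcover_image
      (fun a ha => hVopen a ha) (fun x hx => Set.mem_biUnion hx (hVmem x hx))
    have hUopen : IsOpen (⋃ a ∈ s, V a) := isOpen_biUnion fun a ha => hVopen a (hs_sub ha)
    obtain ⟨δ, hδpos, hδsub⟩ := hKhat.exists_thickening_subset_open hUopen hcover
    obtain ⟨j, hj⟩ := exists_pow_lt_of_lt_one hδpos (by norm_num : (2⁻¹ : ℝ) < 1)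
    have hcomplmem : (Khat ∪ ⋃ m ∈ Finset.range j, K m)ᶜ ∈ F :=
      Ultrafilter.compl_mem_iff_notMem.mpr (hfin j)
    have hTmem : ((Khat ∪ ⋃ m, K m) ∩ (Khat ∪ ⋃ m ∈ Finset.range j, K m)ᶜ) ∈ F :=
      Filter.inter_mem hLmem hcomplmem
    have hTsub : ((Khat ∪ ⋃ m, K m) ∩ (Khat ∪ ⋃ m ∈ Finset.range j, K m)ᶜ) ⊆
        Metric.thickening δ Khat := by
      rintro x ⟨hxL, hxC⟩
      have hxKhat : x ∉ Khat := fun h => hxC (Or.inl h)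
      rcases hxL with h | h
      · exact absurd h hxKhat
      obtain ⟨m, hm⟩ := Set.mem_iUnion.mp h
      have hmj : j ≤ m := by
        by_contra hlt
        exact hxC (Or.inr (Set.mem_biUnion (Finset.mem_range.mpr (not_le.mp hlt)) hm))
      rw [Metric.mem_thickening_iff_infEdist_lt]
      calc EMetric.infEdist x Khat ≤ ENNReal.ofReal ((2⁻¹ : ℝ) ^ m) := hdist m x hm
        _ ≤ ENNReal.ofReal ((2⁻¹ : ℝ) ^ j) :=
            ENNReal.ofReal_le_ofReal (pow_le_pow_of_le_one (by norm_num) (by norm_num) hmj)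
        _ < ENNReal.ofReal δ := (ENNReal.ofReal_lt_ofReal_iff hδpos).mpr hj
    have hUmem : (⋃ a ∈ s, V a) ∈ F :=
      Filter.mem_of_superset hTmem (hTsub.trans hδsub)
    have hUcompl : (⋃ a ∈ s, V a)ᶜ ∈ F := by
      rw [Set.compl_iUnion₂]
      exact (Filter.biInter_mem hsfin).mpr fun a ha => hVcompl a (hs_sub ha)
    have : (∅ : Set M) ∈ F := by
      have := Filter.inter_mem hUmem hUcompl
      rwa [Set.inter_compl_self] at this
    exact Filter.empty_notMem (F : Filter M) this

end Statement17Aux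

open Statement17Aux in
/-- For every separable metrizable space `M`, it is not the case that
`K(M) ≥_T Σ(ω^{ω₁})`. -/
theorem statement17 (M : Type u) [TopologicalSpace M]
    [TopologicalSpace.MetrizableSpace M] [TopologicalSpace.SeparableSpace M] :
    ¬ TukeyGE (KM M) SigmaOm := by
  intro hT
  obtain ⟨φ, hφ⟩ := hT
  -- From the Tukey quotient, extract a Tukey map `ψ : Σ(ω^{ω₁}) → K(M)`.
  have hψ0 : ∀ f : SigmaOm, ∃ Kf : KM M, ∀ K : KM M, Kf ≤ K → f ≤ φ K := by
    intro f
    by_contra h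
    push_neg at h
    have hC : IsCofinalFor' (Set.univ : Set (KM M)) {K : KM M | ¬ f ≤ φ K} := by
      intro p _
      obtain ⟨K, hK, hnot⟩ := h p
      exact ⟨K, hnot, hK⟩
    obtain ⟨c, hc, hfc⟩ := hφ _ hC f (Set.mem_univ f)
    obtain ⟨K, hKC, rfl⟩ := hc
    exact hKC hfc
  choose ψ hψ using hψ0
  letI : MetricSpace M := TopologicalSpace.metrizableSpaceMetric M
  haveI : SecondCountableTopology M :=
    UniformSpace.secondCountable_of_separable M
  set Kb : O1 → Set M := fun β => (ψ (fb β)).1 with hKbdef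
  have hKbc : ∀ β, IsCompact (Kb β) := fun β => (ψ (fb β)).2
  -- pointwise evaluation of the order on SigmaOm
  have hptwise : ∀ (f g : SigmaOm), f ≤ g → ∀ γ, f.1 γ ≤ g.1 γ := by
    intro f g h γ
    exact h γ
  by_cases hE : ({β : O1 | Kb β = ∅}).Countable
  · -- main case: uncountably many nonempty values
    have hΩ1 : ¬ ({β : O1 | (Kb β).Nonempty}).Countable := by
      intro h
      apply O1_uncountable
      have hsub : (Set.univ : Set O1) ⊆ {β | Kb β = ∅} ∪ {β | (Kb β).Nonempty} := by
        intro β _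
        rcases Set.eq_empty_or_nonempty (Kb β) with h' | h'
        · exact Or.inl h'
        · exact Or.inr h'
      exact (hE.union h).mono hsub
    set Ω1 : Set O1 := {β : O1 | (Kb β).Nonempty} with hΩ1def
    set u : ↥Ω1 → TopologicalSpace.NonemptyCompacts M :=
      fun i => ⟨⟨Kb i.1, hKbc i.1⟩, i.2⟩ with hudef
    have hI : ¬ (Set.univ : Set ↥Ω1).Countable := by
      rw [Set.countable_univ_iff, Set.countable_coe_iff]
      exact hΩ1
    obtain ⟨i₀, hi₀⟩ := prune hI u
    set εm : ℕ → ENNReal := fun m => ENNReal.ofReal ((2⁻¹ : ℝ) ^ m) with hεmdef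
    have hεmpos : ∀ m, 0 < εm m := fun m => ENNReal.ofReal_pos.mpr (by positivity)
    set Ωm : ℕ → Set O1 := fun m =>
      Subtype.val '' {i : ↥Ω1 | edist (u i) (u i₀) < εm m} with hΩmdef
    have hΩmu : ∀ m, ¬ (Ωm m).Countable := by
      intro m h
      apply hi₀ (εm m) (hεmpos m)
      refine (h.preimage Subtype.val_injective).mono ?_
      intro i hi
      exact Set.mem_preimage.mpr (Set.mem_image_of_mem _ hi)
    have hGc : (⋃ m : ℕ, {γ : O1 | ∃ N : ℕ, ∀ β ∈ Ωm m, (fb β).1 γ ≤ N}).Countable :=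
      Set.countable_iUnion fun m => coherent (hΩmu m)
    obtain ⟨γ, hγ⟩ := exists_notMem hGc
    have hpick : ∀ m : ℕ, ∃ i : ↥Ω1, edist (u i) (u i₀) < εm m ∧ m < (fb i.1).1 γ := by
      intro m
      have hγm : γ ∉ {γ : O1 | ∃ N : ℕ, ∀ β ∈ Ωm m, (fb β).1 γ ≤ N} :=
        fun h => hγ (Set.mem_iUnion.mpr ⟨m, h⟩)
      simp only [Set.mem_setOf_eq, not_exists] at hγm
      have hm := hγm m
      push_neg at hm
      obtain ⟨β, hβ, hval⟩ := hm
      obtain ⟨i, hi, rfl⟩ := hβ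
      exact ⟨i, hi, hval⟩
    choose iB hiB hvB using hpick
    set Khat : Set M := Kb (i₀ : O1) with hKhatdef
    have hKhatc : IsCompact Khat := hKbc _
    have hdist : ∀ m, ∀ x ∈ Kb ((iB m : ↥Ω1) : O1),
        EMetric.infEdist x Khat ≤ ENNReal.ofReal ((2⁻¹ : ℝ) ^ m) := by
      intro m x hx
      have hedist : edist (u (iB m)) (u i₀) =
          EMetric.hausdorffEdist (Kb ((iB m : ↥Ω1) : O1)) Khat := rfl
      have h1 : EMetric.infEdist x Khat ≤
          EMetric.hausdorffEdist (Kb ((iB m : ↥Ω1) : O1)) Khat :=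
        EMetric.infEdist_le_hausdorffEdist_of_mem hx
      rw [← hedist] at h1
      exact le_trans h1 (le_of_lt (hiB m))
    have hLc : IsCompact (Khat ∪ ⋃ m, Kb ((iB m : ↥Ω1) : O1)) :=
      compact_union hKhatc _ (fun m => hKbc _) hdist
    set KL : KM M := ⟨Khat ∪ ⋃ m, Kb ((iB m : ↥Ω1) : O1), hLc⟩ with hKLdef
    have hcontra : ∀ m : ℕ, m < (φ KL).1 γ := by
      intro m
      have hle : ψ (fb ((iB m : ↥Ω1) : O1)) ≤ KL := by
        show (ψ (fb ((iB m : ↥Ω1) : O1))).1 ≤ KL.1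
        intro x hx
        exact Or.inr (Set.mem_iUnion.mpr ⟨m, hx⟩)
      have h1 : fb ((iB m : ↥Ω1) : O1) ≤ φ KL := hψ _ _ hle
      exact lt_of_lt_of_le (hvB m) (hptwise _ _ h1 γ)
    exact lt_irrefl _ (hcontra ((φ KL).1 γ))
  · -- degenerate case: uncountably many `β` with `ψ (fb β) = ∅`
    obtain ⟨γ, hγ⟩ := exists_notMem (coherent hE)
    simp only [Set.mem_setOf_eq, not_exists] at hγ
    set KL : KM M := ⟨∅, isCompact_empty⟩ with hKLdef
    have hm := hγ ((φ KL).1 γ)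
    push_neg at hm
    obtain ⟨β, hβmem, hβval⟩ := hm
    have hle : ψ (fb β) ≤ KL := by
      show Kb β ≤ (∅ : Set M)
      rw [hβmem]
    have h1 : fb β ≤ φ KL := hψ _ _ hle
    exact absurd (hptwise _ _ h1 γ) (not_le.mpr hβval)
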